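/- For all real ε > 0, every integer K > 5, and every integer T ≥ 1, ∑_{t=1}^{T} (K−5)/(3·e^{tε} + K − 5) ≥ (1/ε)·log( (e^{(T+1)ε}/(3·e^{(T+1)ε} + K − 5)) · ((3·e^{ε} + K − 5)/e^{ε}) ). -/

import Mathlib

open Real Finset

/-- Convexity of exp: `exp (s*ε) ≤ 1 + s*(exp ε - 1)` for `s ∈ [0,1]`. -/
lemma exp_convex_aux (ε s : ℝ) (hs0 : 0 ≤ s) (hs1 : s ≤ 1) :
    Real.exp (s * ε) ≤ 1 + s * (Real.exp ε - 1) := by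
  have h := convexOn_exp.2 (Set.mem_univ (0:ℝ)) (Set.mem_univ ε)
    (by linarith : (0:ℝ) ≤ 1 - s) hs0 (by ring)
  simp only [smul_eq_mul, mul_zero, zero_add, Real.exp_zero] at h
  nlinarith [h]

/-- Key logarithmic inequality. -/
lemma key_log (ε c a : ℝ) (hε : 0 < ε) (hc : 0 < c) (ha : 0 < a) :
    Real.log ((a * Real.exp ε + c) / (a + c)) ≥ ε * a / (a + c) := by
  have hac : 0 < a + c := by linarith
  have hs0 : 0 ≤ a / (a + c) := by positivity
  have hs1 : a / (a + c) ≤ 1 := by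
    rw [div_le_one hac]; linarith
  have h := exp_convex_aux ε (a / (a + c)) hs0 hs1
  have hnum : 0 < a * Real.exp ε + c := by positivity
  rw [ge_iff_le, Real.le_log_iff_exp_le (by positivity)]
  calc Real.exp (ε * a / (a + c)) = Real.exp ((a / (a + c)) * ε) := by ring_nf
    _ ≤ 1 + (a / (a + c)) * (Real.exp ε - 1) := h
    _ = (a * Real.exp ε + c) / (a + c) := by field_simp; ring

theorem privacy_lower_bound_sum (ε : ℝ) (hε : 0 < ε) (K : ℕ) (hK : 5 < K)
    (T : ℕ) (hT : 1 ≤ T) :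
    ∑ t ∈ Finset.Icc 1 T, ((K : ℝ) - 5) / (3 * Real.exp (t * ε) + (K : ℝ) - 5) ≥
      (1 / ε) * Real.log
        ((Real.exp (((T : ℝ) + 1) * ε) / (3 * Real.exp (((T : ℝ) + 1) * ε) + (K : ℝ) - 5)) *
          ((3 * Real.exp ε + (K : ℝ) - 5) / Real.exp ε)) := by
  set c : ℝ := (K : ℝ) - 5 with hc_def
  have hc : 0 < c := by
    have : (5:ℝ) < (K:ℝ) := by exact_mod_cast hK
    simp [hc_def]; linarith
  have hrw : ∀ x : ℝ, 3 * x + (K : ℝ) - 5 = 3 * x + c := fun x => by rw [hc_def]; ring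
  simp only [hrw]
  set F : ℕ → ℝ := fun n =>
    (1 / ε) * Real.log (Real.exp (n * ε) / (3 * Real.exp (n * ε) + c)) with hF_def
  -- RHS = F (T+1) - F 1
  have hden : ∀ x : ℝ, 0 < 3 * Real.exp x + c := fun x => by positivity
  have hRHS : (1 / ε) * Real.log
        ((Real.exp (((T : ℝ) + 1) * ε) / (3 * Real.exp (((T : ℝ) + 1) * ε) + c)) *
          ((3 * Real.exp ε + c) / Real.exp ε)) = F (T + 1) - F 1 := by
    have h1 : (((T:ℕ) + 1 : ℕ) : ℝ) = (T:ℝ) + 1 := by push_cast; ring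
    have e1 : Real.exp (((T:ℝ) + 1) * ε) ≠ 0 := (Real.exp_pos _).ne'
    have e2 : (3 * Real.exp (((T:ℝ) + 1) * ε) + c) ≠ 0 := (hden _).ne'
    have e3 : Real.exp ε ≠ 0 := (Real.exp_pos _).ne'
    have e4 : (3 * Real.exp ε + c) ≠ 0 := (hden _).ne'
    simp only [hF_def, h1, Nat.cast_one, one_mul]
    rw [Real.log_mul (by positivity) (by positivity), Real.log_div e1 e2,
      Real.log_div e4 e3, Real.log_div e3 e4]
    ring
  rw [hRHS]
  -- per-step inequality
  have step : ∀ n : ℕ, F (n + 1) - F n ≤ c / (3 * Real.exp (n * ε) + c) := by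
    intro n
    set a : ℝ := 3 * Real.exp (n * ε) with ha_def
    have ha : 0 < a := by positivity
    have hac : 0 < a + c := by linarith
    have key := key_log ε c a hε hc ha
    have hstep : F (n + 1) - F n = 1 - (1 / ε) * Real.log ((a * Real.exp ε + c) / (a + c)) := by
      have h1 : ((n + 1 : ℕ) : ℝ) * ε = (n:ℝ) * ε + ε := by push_cast; ring
      have e1 : Real.exp ((n:ℝ) * ε) ≠ 0 := (Real.exp_pos _).ne'
      have e3 : Real.exp ε ≠ 0 := (Real.exp_pos _).ne'
      have hnum : a * Real.exp ε + c ≠ 0 := by positivity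
      simp only [hF_def, h1, Real.exp_add]
      rw [Real.log_div (by positivity) (by positivity : (3 * (Real.exp ((n:ℝ)*ε) * Real.exp ε) + c) ≠ 0),
        Real.log_div e1 (by positivity : (3 * Real.exp ((n:ℝ)*ε) + c) ≠ 0),
        Real.log_mul e1 e3,
        Real.log_div hnum hac.ne']
      have : 3 * (Real.exp ((n:ℝ)*ε) * Real.exp ε) + c = a * Real.exp ε + c := by
        rw [ha_def]; ring
      rw [this, ha_def]
      field_simp
      simp only [Real.log_exp]
      ring
    rw [hstep]
    have h2 : ε * a / (a + c) ≤ Real.log ((a * Real.exp ε + c) / (a + c)) := key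
    have h3 : (1 / ε) * (ε * a / (a + c)) ≤ (1 / ε) * Real.log ((a * Real.exp ε + c) / (a + c)) := by
      apply mul_le_mul_of_nonneg_left h2 (by positivity)
    have h4 : (1 / ε) * (ε * a / (a + c)) = a / (a + c) := by
      field_simp
    have h5 : 1 - a / (a + c) = c / (a + c) := by
      field_simp
      ring
    rw [ha_def] at *
    linarith [h3, h4 ▸ h3]
  -- telescoping
  have htel : ∑ i ∈ Finset.range T, (F (i + 1 + 1) - F (i + 1)) = F (T + 1) - F 1 := by
    exact Finset.sum_range_sub (fun i => F (i + 1)) T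
  rw [ge_iff_le, ← htel, ← Finset.Ico_add_one_right_eq_Icc, Finset.sum_Ico_eq_sum_range]
  simp only [Nat.add_sub_cancel_left, Nat.succ_sub_one, Nat.add_sub_cancel]
  apply Finset.sum_le_sum
  intro i _
  have h := step (i + 1)
  have hcast : ((1 + i : ℕ) : ℝ) = (((i + 1 : ℕ)) : ℝ) := by push_cast; ring
  rw [hcast]
  exact h
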